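/- arXiv:1809.09069 — 6 statements merged into one kernel-verified Lean document; each statement's English description precedes it below -/
import Mathlib

section
/- Let α, β, σ > 0, set d = -√(α² + 2βσ²), b = (α - d)/(2β), c = (-α - d)/(2β), and G(τ) = (e^{dτ} - 1)/(b + c·e^{dτ}). Then G satisfies the Riccati ODE G'(τ) = (σ²/2)G(τ)² - αG(τ) - β with initial condition G(0) = 0. -/
/-- The function G(τ) = (e^{dτ} - 1)/(b + c·e^{dτ}) solves the Riccati ODE
    G' = (σ²/2)G² - αG - β with G(0) = 0. -/
theorem stmt0 (α β σ : ℝ) (hα : 0 < α) (hβ : 0 < β) (hσ : 0 < σ)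
    (d b c : ℝ)
    (hd : d = -Real.sqrt (α ^ 2 + 2 * β * σ ^ 2))
    (hb : b = (α - d) / (2 * β))
    (hc : c = (-α - d) / (2 * β))
    (G : ℝ → ℝ)
    (hG : ∀ τ, G τ = (Real.exp (d * τ) - 1) / (b + c * Real.exp (d * τ))) :
    G 0 = 0 ∧
      ∀ τ, HasDerivAt G (σ ^ 2 / 2 * (G τ) ^ 2 - α * G τ - β) τ := by
  have hpos : (0:ℝ) < α ^ 2 + 2 * β * σ ^ 2 := by positivity
  have hd2 : d ^ 2 = α ^ 2 + 2 * β * σ ^ 2 := by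
    rw [hd, neg_pow]
    simp [Real.sq_sqrt hpos.le]
  have hsq : α < Real.sqrt (α ^ 2 + 2 * β * σ ^ 2) := by
    have h1 : α ^ 2 < α ^ 2 + 2 * β * σ ^ 2 := by nlinarith [mul_pos hβ (pow_pos hσ 2)]
    have h2 := Real.sqrt_lt_sqrt (sq_nonneg α) h1
    rwa [Real.sqrt_sq hα.le] at h2
  have hdneg : d < 0 := by
    rw [hd]; simpa using Real.sqrt_pos.mpr hpos
  have hbpos : 0 < b := by
    rw [hb]
    apply div_pos <;> linarith
  have hcpos : 0 < c := by
    rw [hc, hd]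
    have : 0 < -α + Real.sqrt (α ^ 2 + 2 * β * σ ^ 2) := by linarith
    have h2 : (0:ℝ) < 2 * β := by linarith
    apply div_pos; · linarith
    · exact h2
  have hden : ∀ τ : ℝ, 0 < b + c * Real.exp (d * τ) := fun τ => by
    have := Real.exp_pos (d * τ); nlinarith
  have hGfun : G = fun τ => (Real.exp (d * τ) - 1) / (b + c * Real.exp (d * τ)) :=
    funext hG
  constructor
  · rw [hG 0]; simp
  · intro τ
    set E := Real.exp (d * τ) with hE
    have hEderiv : HasDerivAt (fun t => Real.exp (d * t)) (d * E) τ := by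
      have h1 : HasDerivAt (fun t : ℝ => d * t) d τ := by
        simpa using (hasDerivAt_id τ).const_mul d
      simpa [hE, mul_comm] using h1.exp
    have hnum : HasDerivAt (fun t => Real.exp (d * t) - 1) (d * E) τ :=
      hEderiv.sub_const 1
    have hdenom : HasDerivAt (fun t => b + c * Real.exp (d * t)) (c * (d * E)) τ :=
      (hEderiv.const_mul c).const_add b
    have hne : b + c * E ≠ 0 := (hden τ).ne'
    have hder := hnum.div hdenom hne
    have key : d * E * (b + c * E) - (E - 1) * (c * (d * E)) =
        σ ^ 2 / 2 * (E - 1) ^ 2 - α * (E - 1) * (b + c * E) - β * (b + c * E) ^ 2 := by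
      rw [hb, hc]
      field_simp
      linear_combination ((E - 1) ^ 2) * hd2
    rw [hGfun]
    refine hder.congr_deriv ?_
    simp only [← hE]
    rw [key]
    rw [sub_div, sub_div, mul_div_cancel_right₀ _ (pow_ne_zero 2 hne)]
    field_simp
end

section
/- Fix τ > 0, μ ∈ ℝ, η > 0, α, σ > 0. As β → 0⁺, F(τ) = exp(-(μ + η/b)τ + η((b+c)/(bc))·ln(b + c·e^{dτ}) - η((b+c)/(bc))·ln(b + c)) tends to exp(-μτ), where d = -√(α² + 2βσ²), b = (α - d)/(2β), c = (-α - d)/(2β). -/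
open Filter Real

lemma stmt8_aux (α σ η μ τ β s : ℝ) (hα : 0 < α) (hσ : 0 < σ) (hβ : 0 < β)
    (hs2 : s ^ 2 = α ^ 2 + 2 * β * σ ^ 2) (hsgt : α < s) :
    -(μ + η / ((α - -s) / (2 * β))) * τ
      + η * ((((α - -s) / (2 * β)) + ((-α - -s) / (2 * β))) /
          (((α - -s) / (2 * β)) * ((-α - -s) / (2 * β)))) *
        Real.log (((α - -s) / (2 * β)) + ((-α - -s) / (2 * β)) * Real.exp (-s * τ))
      - η * ((((α - -s) / (2 * β)) + ((-α - -s) / (2 * β))) /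
          (((α - -s) / (2 * β)) * ((-α - -s) / (2 * β)))) *
        Real.log (((α - -s) / (2 * β)) + ((-α - -s) / (2 * β)))
    = -(μ + η * (2 * β) / (α + s)) * τ
      + η * (2 * s / σ ^ 2) *
        Real.log (((α + s) ^ 2 + 2 * β * σ ^ 2 * Real.exp (-s * τ))
          / ((α + s) ^ 2 + 2 * β * σ ^ 2)) := by
  have hspos : 0 < s := lt_trans hα hsgt
  have e1 : α - -s = α + s := by ring
  have e2 : -α - -s = s - α := by ring
  rw [e1, e2]
  have hβ' : (2 * β) ≠ 0 := by positivity
  have hαs : (0:ℝ) < α + s := by linarith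
  have hbpos : 0 < (α + s) / (2 * β) := by positivity
  have hcpos : 0 < (s - α) / (2 * β) := div_pos (by linarith) (by positivity)
  have hE : 0 < Real.exp (-s * τ) := Real.exp_pos _
  have hXpos : 0 < (α + s) / (2 * β) + (s - α) / (2 * β) * Real.exp (-s * τ) := by positivity
  have hYpos : 0 < (α + s) / (2 * β) + (s - α) / (2 * β) := by positivity
  have hK : (((α + s) / (2 * β)) + ((s - α) / (2 * β))) /
      (((α + s) / (2 * β)) * ((s - α) / (2 * β))) = 2 * s / σ ^ 2 := by
    have hbc : ((α + s) / (2 * β)) * ((s - α) / (2 * β)) = σ ^ 2 / (2 * β) := by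
      rw [div_mul_div_comm, div_eq_div_iff (by positivity) hβ']
      linear_combination (2 * β) * hs2
    rw [hbc]
    rw [div_eq_div_iff (by positivity) (by positivity)]
    field_simp
    ring
  have hηb : η / ((α + s) / (2 * β)) = η * (2 * β) / (α + s) := by
    rw [div_div_eq_mul_div]
  have hlog : Real.log ((α + s) / (2 * β) + (s - α) / (2 * β) * Real.exp (-s * τ))
      - Real.log ((α + s) / (2 * β) + (s - α) / (2 * β))
      = Real.log (((α + s) ^ 2 + 2 * β * σ ^ 2 * Real.exp (-s * τ))
          / ((α + s) ^ 2 + 2 * β * σ ^ 2)) := by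
    rw [← Real.log_div hXpos.ne' hYpos.ne']
    congr 1
    rw [div_eq_div_iff hYpos.ne' (by positivity)]
    linear_combination ((α + s) * (Real.exp (-s * τ) - 1) / (2 * β)) * hs2
  rw [hK, hηb, ← hlog]
  ring

/-- For fixed τ > 0, F(τ) → e^{-μτ} as β → 0⁺. -/
theorem stmt8 (α σ η μ τ : ℝ) (hα : 0 < α) (hσ : 0 < σ) (hη : 0 < η) (hτ : 0 < τ) :
    Filter.Tendsto
      (fun β : ℝ =>
        let d := -Real.sqrt (α ^ 2 + 2 * β * σ ^ 2)
        let b := (α - d) / (2 * β)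
        let c := (-α - d) / (2 * β)
        Real.exp (-(μ + η / b) * τ
          + η * ((b + c) / (b * c)) * Real.log (b + c * Real.exp (d * τ))
          - η * ((b + c) / (b * c)) * Real.log (b + c)))
      (nhdsWithin 0 (Set.Ioi 0)) (nhds (Real.exp (-μ * τ))) := by
  set l := nhdsWithin (0:ℝ) (Set.Ioi 0) with hl
  set s : ℝ → ℝ := fun β => Real.sqrt (α ^ 2 + 2 * β * σ ^ 2) with hsdef
  have hscont : Tendsto s (nhds 0) (nhds α) := by
    have hc : ContinuousAt s 0 := by
      apply Real.continuous_sqrt.continuousAt.comp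
      fun_prop
    have h0 : s 0 = α := by simp [hsdef, Real.sqrt_sq hα.le]
    simpa [h0] using hc.tendsto
  have hs : Tendsto s l (nhds α) := hscont.mono_left nhdsWithin_le_nhds
  have hid : Tendsto (fun β : ℝ => β) l (nhds 0) :=
    tendsto_id.mono_left nhdsWithin_le_nhds
  set g : ℝ → ℝ := fun β =>
    -(μ + η * (2 * β) / (α + s β)) * τ
      + η * (2 * s β / σ ^ 2) *
        Real.log (((α + s β) ^ 2 + 2 * β * σ ^ 2 * Real.exp (-(s β) * τ))
          / ((α + s β) ^ 2 + 2 * β * σ ^ 2)) with hgdef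
  have hgt : Tendsto g l (nhds (-μ * τ)) := by
    have hαα : (0:ℝ) < α + α := by linarith
    have hsq : Tendsto (fun β => (α + s β) ^ 2) l (nhds ((α + α) ^ 2)) :=
      ((tendsto_const_nhds : Tendsto (fun _ : ℝ => α) l (nhds α)).add hs).pow 2
    have hbb : Tendsto (fun β : ℝ => 2 * β * σ ^ 2) l (nhds 0) := by
      have h1 : Tendsto (fun β : ℝ => 2 * β) l (nhds (2 * 0)) := hid.const_mul 2
      have h2 := h1.mul_const (σ ^ 2)
      simpa using h2
    have hexp : Tendsto (fun β => Real.exp (-(s β) * τ)) l (nhds (Real.exp (-α * τ))) :=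
      Real.continuous_exp.continuousAt.tendsto.comp
        (hs.neg.mul_const τ)
    have hnum : Tendsto (fun β => (α + s β) ^ 2 + 2 * β * σ ^ 2 * Real.exp (-(s β) * τ)) l
        (nhds ((α + α) ^ 2)) := by
      have := hsq.add (hbb.mul hexp)
      simpa using this
    have hden : Tendsto (fun β => (α + s β) ^ 2 + 2 * β * σ ^ 2) l (nhds ((α + α) ^ 2)) := by
      have := hsq.add hbb
      simpa using this
    have hratio : Tendsto (fun β => ((α + s β) ^ 2 + 2 * β * σ ^ 2 * Real.exp (-(s β) * τ))
        / ((α + s β) ^ 2 + 2 * β * σ ^ 2)) l (nhds 1) := by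
      have := hnum.div hden (by positivity)
      rw [div_self (by positivity : ((α + α):ℝ) ^ 2 ≠ 0)] at this
      exact this
    have hlog : Tendsto (fun β =>
        Real.log (((α + s β) ^ 2 + 2 * β * σ ^ 2 * Real.exp (-(s β) * τ))
          / ((α + s β) ^ 2 + 2 * β * σ ^ 2))) l (nhds 0) := by
      have := (Real.continuousAt_log (by norm_num : (1:ℝ) ≠ 0)).tendsto.comp hratio
      rw [Real.log_one] at this
      exact this
    have hfrac : Tendsto (fun β => η * (2 * β) / (α + s β)) l (nhds 0) := by
      have h1 : Tendsto (fun β : ℝ => η * (2 * β)) l (nhds (η * (2 * 0))) :=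
        (hid.const_mul 2).const_mul η
      have := h1.div ((tendsto_const_nhds : Tendsto (fun _ : ℝ => α) l (nhds α)).add hs)
        (by positivity : (α + α : ℝ) ≠ 0)
      simp only [mul_zero, zero_div] at this
      exact this
    have h2s : Tendsto (fun β => η * (2 * s β / σ ^ 2)) l (nhds (η * (2 * α / σ ^ 2))) :=
      (((hs.const_mul 2).div_const (σ ^ 2)).const_mul η)
    have hfinal := (((tendsto_const_nhds : Tendsto (fun _ : ℝ => μ) l (nhds μ)).add
      hfrac).neg.mul_const τ).add (h2s.mul hlog)
    have : Tendsto g l (nhds (-(μ + 0) * τ + η * (2 * α / σ ^ 2) * 0)) := by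
      refine hfinal.congr fun x => ?_
      rfl
    simpa using this
  refine (Real.continuous_exp.continuousAt.tendsto.comp hgt).congr' ?_
  filter_upwards [self_mem_nhdsWithin] with β (hβ : 0 < β)
  have hs2 : s β ^ 2 = α ^ 2 + 2 * β * σ ^ 2 := Real.sq_sqrt (by positivity)
  have hsgt : α < s β := by
    have h := Real.sqrt_lt_sqrt (by positivity : (0:ℝ) ≤ α ^ 2)
      (by have h0 : 0 < 2 * β * σ ^ 2 := by positivity
          linarith : α ^ 2 < α ^ 2 + 2 * β * σ ^ 2)
    rwa [Real.sqrt_sq hα.le] at h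
  exact congrArg Real.exp (stmt8_aux α σ η μ τ β (s β) hα hσ hβ hs2 hsgt).symm
end

section
/- The function f(x, v, τ) = exp(C(τ) + D(τ)v + iφx), with C, D: [0,∞) → ℂ differentiable, satisfies the PDE (1/2)σ_x²v·f_xx + ρσ_xσv·f_xv + (1/2)σ²v·f_vv + ζv·f_x + (a - b̃v)·f_v - f_τ = 0 for all x, v ∈ ℝ and τ ≥ 0 if and only if D' = -(1/2)σ_x²φ² + ρσ_xσ·iφ·D + (1/2)σ²D² + ζiφ - b̃D and C' = aD. -/
open Complex in
private lemma hd_aux (c d : ℂ) (y : ℝ) :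
    HasDerivAt (fun t : ℝ => Complex.exp (c + d * t)) (d * Complex.exp (c + d * y)) y := by
  have h1 : HasDerivAt (fun t : ℝ => (t : ℂ)) 1 y := by
    simpa using (hasDerivAt_id y).ofReal_comp
  have := ((h1.const_mul d).const_add c).cexp
  simpa [mul_comm] using this

open Complex in
/-- f(x,v,τ) = exp(C(τ) + D(τ)v + iφx) satisfies the Heston characteristic PDE
    iff C and D satisfy the corresponding ODE system. -/
theorem stmt12 (σx ρ σ ζ a bb φ : ℝ) (hσ : 0 < σ) (hσx : 0 < σx)
    (C D C' D' : ℝ → ℂ)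
    (hC : ∀ τ, HasDerivAt C (C' τ) τ)
    (hD : ∀ τ, HasDerivAt D (D' τ) τ)
    (f : ℝ → ℝ → ℝ → ℂ)
    (hf : ∀ x v τ : ℝ, f x v τ = Complex.exp (C τ + D τ * v + Complex.I * φ * x)) :
    (∀ x v τ : ℝ, 0 ≤ τ →
        (σx ^ 2 / 2 : ℂ) * v * deriv (fun y : ℝ => deriv (fun y' : ℝ => f y' v τ) y) x
          + (ρ * σx * σ : ℂ) * v * deriv (fun y : ℝ => deriv (fun w : ℝ => f y w τ) v) x
          + (σ ^ 2 / 2 : ℂ) * v * deriv (fun w : ℝ => deriv (fun w' : ℝ => f x w' τ) w) v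
          + (ζ : ℂ) * v * deriv (fun y : ℝ => f y v τ) x
          + ((a : ℂ) - (bb : ℂ) * v) * deriv (fun w : ℝ => f x w τ) v
          - deriv (fun t : ℝ => f x v t) τ = 0) ↔
      (∀ τ : ℝ, 0 ≤ τ →
        D' τ = -(σx ^ 2 / 2 : ℂ) * φ ^ 2 + (ρ * σx * σ : ℂ) * Complex.I * φ * D τ
            + (σ ^ 2 / 2 : ℂ) * (D τ) ^ 2 + (ζ : ℂ) * Complex.I * φ - (bb : ℂ) * D τ ∧
        C' τ = (a : ℂ) * D τ) := by
  have hI : Complex.I * Complex.I = -1 := Complex.I_mul_I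
  -- first x-derivative
  have dx : ∀ (x v τ : ℝ),
      deriv (fun y : ℝ => Complex.exp (C τ + D τ * v + Complex.I * φ * y)) x
        = Complex.I * φ * Complex.exp (C τ + D τ * v + Complex.I * φ * x) :=
    fun x v τ => (hd_aux (C τ + D τ * v) (Complex.I * φ) x).deriv
  -- first v-derivative
  have dv : ∀ (x v τ : ℝ),
      deriv (fun w : ℝ => Complex.exp (C τ + D τ * w + Complex.I * φ * x)) v
        = D τ * Complex.exp (C τ + D τ * v + Complex.I * φ * x) := by
    intro x v τ
    have e : (fun w : ℝ => Complex.exp (C τ + D τ * w + Complex.I * φ * x))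
        = fun w : ℝ => Complex.exp ((C τ + Complex.I * φ * x) + D τ * w) := by
      funext w; congr 1; ring
    rw [e, (hd_aux _ _ v).deriv]
    congr 1; ring
  -- second x-derivative
  have dxx : ∀ (x v τ : ℝ),
      deriv (fun y : ℝ => deriv (fun y' : ℝ =>
          Complex.exp (C τ + D τ * v + Complex.I * φ * y')) y) x
        = Complex.I * φ * (Complex.I * φ
            * Complex.exp (C τ + D τ * v + Complex.I * φ * x)) := by
    intro x v τ
    have e : (fun y : ℝ => deriv (fun y' : ℝ =>
        Complex.exp (C τ + D τ * v + Complex.I * φ * y')) y)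
        = fun y : ℝ => Complex.I * φ
            * Complex.exp ((C τ + D τ * v) + (Complex.I * φ) * y) :=
      funext fun y => dx y v τ
    rw [e, ((hd_aux (C τ + D τ * v) (Complex.I * φ) x).const_mul (Complex.I * φ)).deriv]
  -- mixed derivative
  have dxv : ∀ (x v τ : ℝ),
      deriv (fun y : ℝ => deriv (fun w : ℝ =>
          Complex.exp (C τ + D τ * w + Complex.I * φ * y)) v) x
        = D τ * (Complex.I * φ
            * Complex.exp (C τ + D τ * v + Complex.I * φ * x)) := by
    intro x v τ
    have e : (fun y : ℝ => deriv (fun w : ℝ =>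
        Complex.exp (C τ + D τ * w + Complex.I * φ * y)) v)
        = fun y : ℝ => D τ * Complex.exp ((C τ + D τ * v) + (Complex.I * φ) * y) :=
      funext fun y => dv y v τ
    rw [e, ((hd_aux (C τ + D τ * v) (Complex.I * φ) x).const_mul (D τ)).deriv]
  -- second v-derivative
  have dvv : ∀ (x v τ : ℝ),
      deriv (fun w : ℝ => deriv (fun w' : ℝ =>
          Complex.exp (C τ + D τ * w' + Complex.I * φ * x)) w) v
        = D τ * (D τ * Complex.exp (C τ + D τ * v + Complex.I * φ * x)) := by
    intro x v τ
    have e : (fun w : ℝ => deriv (fun w' : ℝ =>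
        Complex.exp (C τ + D τ * w' + Complex.I * φ * x)) w)
        = fun w : ℝ => D τ * Complex.exp ((C τ + Complex.I * φ * x) + D τ * w) := by
      funext w
      rw [dv x w τ]
      congr 2; ring
    rw [e, ((hd_aux (C τ + Complex.I * φ * x) (D τ) v).const_mul (D τ)).deriv]
    congr 2 <;> ring
  -- τ-derivative
  have dt : ∀ (x v τ : ℝ),
      deriv (fun t : ℝ => Complex.exp (C t + D t * v + Complex.I * φ * x)) τ
        = Complex.exp (C τ + D τ * v + Complex.I * φ * x) * (C' τ + D' τ * v) := by
    intro x v τ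
    exact (((hC τ).add ((hD τ).mul_const (v : ℂ))).add_const (Complex.I * φ * x)).cexp.deriv
  -- main algebraic reduction
  have main : ∀ (x v τ : ℝ),
      (σx ^ 2 / 2 : ℂ) * v * deriv (fun y : ℝ => deriv (fun y' : ℝ => f y' v τ) y) x
          + (ρ * σx * σ : ℂ) * v * deriv (fun y : ℝ => deriv (fun w : ℝ => f y w τ) v) x
          + (σ ^ 2 / 2 : ℂ) * v * deriv (fun w : ℝ => deriv (fun w' : ℝ => f x w' τ) w) v
          + (ζ : ℂ) * v * deriv (fun y : ℝ => f y v τ) x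
          + ((a : ℂ) - (bb : ℂ) * v) * deriv (fun w : ℝ => f x w τ) v
          - deriv (fun t : ℝ => f x v t) τ
        = (((σx ^ 2 / 2 : ℂ) * (Complex.I * φ) * (Complex.I * φ)
              + (ρ * σx * σ : ℂ) * (D τ) * (Complex.I * φ)
              + (σ ^ 2 / 2 : ℂ) * (D τ) ^ 2 + (ζ : ℂ) * (Complex.I * φ)
              - (bb : ℂ) * D τ - D' τ) * v
            + ((a : ℂ) * D τ - C' τ))
          * Complex.exp (C τ + D τ * v + Complex.I * φ * x) := by
    intro x v τ
    simp only [hf]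
    rw [dxx, dxv, dvv, dx, dv, dt]
    ring
  constructor
  · intro h τ hτ
    have hv : ∀ v : ℝ,
        ((σx ^ 2 / 2 : ℂ) * (Complex.I * φ) * (Complex.I * φ)
            + (ρ * σx * σ : ℂ) * (D τ) * (Complex.I * φ)
            + (σ ^ 2 / 2 : ℂ) * (D τ) ^ 2 + (ζ : ℂ) * (Complex.I * φ)
            - (bb : ℂ) * D τ - D' τ) * v + ((a : ℂ) * D τ - C' τ) = 0 := by
      intro v
      have h0 := h 0 v τ hτ
      rw [main 0 v τ] at h0
      rcases mul_eq_zero.mp h0 with h' | h'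
      · exact h'
      · exact absurd h' (Complex.exp_ne_zero _)
    have hQ := hv 0
    have hP := hv 1
    simp only [Complex.ofReal_zero, mul_zero, zero_add, Complex.ofReal_one, mul_one] at hQ hP
    constructor
    · linear_combination -hP + hQ + ((σx : ℂ) ^ 2 / 2 * (φ : ℂ) ^ 2) * hI
    · linear_combination -hQ
  · intro h x v τ hτ
    rw [main x v τ]
    obtain ⟨h1, h2⟩ := h τ hτ
    apply mul_eq_zero_of_left
    linear_combination (v : ℂ) * (-h1) + ((v : ℂ) * ((σx : ℂ) ^ 2 / 2 * (φ : ℂ) ^ 2)) * hI - h2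
end

section
/- For constants a, σ > 0, b_j, ρ ∈ ℝ, φ ∈ ℝ \ {0}, ζ ∈ ℝ, define d = √((ρσφi - b_j)² - σ²(2ζφi - φ²)), g = (b_j - ρσφi + d)/(b_j - ρσφi - d), D(τ) = ((b_j - ρσφi + d)/σ²)·(1 - e^{dτ})/(1 - g·e^{dτ}). Then D satisfies the complex Riccati equation D'(τ) = (1/2)σ²D² + (ρσφi - b_j)D + (ζφi - φ²/2) with D(0) = 0, provided 1 - g·e^{dτ} ≠ 0 on the interval considered. -/
set_option maxHeartbeats 1000000

lemma aux13 (σ b d E c : ℂ) (hσ : σ ≠ 0) (hbd : b - d ≠ 0)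
    (hX : b - d - (b + d) * E ≠ 0) (hc : c = (b ^ 2 - d ^ 2) / (2 * σ ^ 2)) :
    σ ^ 2 / 2 * ((b + d) / σ ^ 2 * (1 - E) / (1 - (b + d) / (b - d) * E)) ^ 2
      + (-b) * ((b + d) / σ ^ 2 * (1 - E) / (1 - (b + d) / (b - d) * E)) + c
    = ((b + d) / σ ^ 2 * (0 - d * E) * (1 - (b + d) / (b - d) * E)
        - (b + d) / σ ^ 2 * (1 - E) * (0 - (b + d) / (b - d) * (d * E)))
      / (1 - (b + d) / (b - d) * E) ^ 2 := by
  have h1 : 1 - (b + d) / (b - d) * E = (b - d - (b + d) * E) / (b - d) := by field_simp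
  subst hc
  rw [h1]
  obtain ⟨X, hX'⟩ : ∃ X, b - d - (b + d) * E = X := ⟨_, rfl⟩
  rw [hX'] at hX ⊢
  have hσ2 : (σ:ℂ)^2 ≠ 0 := pow_ne_zero 2 hσ
  have hsx : (σ:ℂ)^2*X ≠ 0 := mul_ne_zero hσ2 hX
  have hA : (2*((σ:ℂ)^2*X)^2*(σ^2*X)) ≠ 0 :=
    mul_ne_zero (mul_ne_zero two_ne_zero (pow_ne_zero 2 hsx)) hsx
  have hB : ((σ:ℂ)^2*(b-d)*(σ^2*(b-d))*X^2) ≠ 0 :=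
    mul_ne_zero (mul_ne_zero (mul_ne_zero hσ2 hbd) (mul_ne_zero hσ2 hbd)) (pow_ne_zero 2 hX)
  field_simp
  rw [← hX']
  ring

/-- Heston's closed-form D(τ) solves the complex Riccati equation
    D' = (σ²/2)D² + (ρσφi - b_j)D + (ζφi - φ²/2) with D(0) = 0. -/
theorem stmt13 (a σ bj ρ φ ζ : ℝ) (ha : 0 < a) (hσ : 0 < σ) (hφ : φ ≠ 0)
    (d g : ℂ)
    (hd2 : d ^ 2 = ((ρ : ℂ) * σ * φ * Complex.I - bj) ^ 2
        - (σ : ℂ) ^ 2 * (2 * ζ * φ * Complex.I - (φ : ℂ) ^ 2))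
    (hd0 : d ≠ 0)
    (hden : (bj : ℂ) - (ρ : ℂ) * σ * φ * Complex.I - d ≠ 0)
    (hg : g = ((bj : ℂ) - (ρ : ℂ) * σ * φ * Complex.I + d)
        / ((bj : ℂ) - (ρ : ℂ) * σ * φ * Complex.I - d))
    (D : ℝ → ℂ)
    (hD : ∀ τ : ℝ, D τ = (((bj : ℂ) - (ρ : ℂ) * σ * φ * Complex.I + d) / (σ : ℂ) ^ 2)
        * (1 - Complex.exp (d * τ)) / (1 - g * Complex.exp (d * τ))) :
    D 0 = 0 ∧
      ∀ τ : ℝ, 1 - g * Complex.exp (d * τ) ≠ 0 →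
        HasDerivAt D ((σ : ℂ) ^ 2 / 2 * (D τ) ^ 2
          + ((ρ : ℂ) * σ * φ * Complex.I - bj) * D τ
          + ((ζ : ℂ) * φ * Complex.I - (φ : ℂ) ^ 2 / 2)) τ := by
  have hfun : D = fun τ : ℝ => (((bj : ℂ) - (ρ : ℂ) * σ * φ * Complex.I + d) / (σ : ℂ) ^ 2)
      * (1 - Complex.exp (d * τ)) / (1 - g * Complex.exp (d * τ)) := funext hD
  subst hfun
  set b : ℂ := (bj : ℂ) - (ρ : ℂ) * σ * φ * Complex.I with hb
  have hσ' : (σ : ℂ) ≠ 0 := by exact_mod_cast hσ.ne'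
  constructor
  · simp
  · intro τ hτ
    set E := Complex.exp (d * τ) with hE
    have hexp : HasDerivAt (fun t : ℝ => Complex.exp (d * t)) (d * E) τ := by
      have h1 : HasDerivAt (fun z : ℂ => Complex.exp (d * z))
          (Complex.exp (d * τ) * d) (τ : ℂ) := by
        have h := (Complex.hasDerivAt_exp (d * τ)).comp (τ : ℂ)
          ((hasDerivAt_id (τ : ℂ)).const_mul d)
        simp only [id, mul_one] at h
        exact h
      simpa [mul_comm] using h1.comp_ofReal
    have hnum : HasDerivAt (fun t : ℝ => ((b + d) / (σ : ℂ) ^ 2) * (1 - Complex.exp (d * t)))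
        (((b + d) / (σ : ℂ) ^ 2) * (0 - d * E)) τ :=
      ((hasDerivAt_const τ (1 : ℂ)).sub hexp).const_mul _
    have hden' : HasDerivAt (fun t : ℝ => 1 - g * Complex.exp (d * t))
        (0 - g * (d * E)) τ :=
      (hasDerivAt_const τ (1 : ℂ)).sub (hexp.const_mul g)
    have hdiv := hnum.div hden' hτ
    refine hdiv.congr_deriv (Eq.symm ?_)
    have key : (ζ : ℂ) * φ * Complex.I - (φ : ℂ) ^ 2 / 2 = (b ^ 2 - d ^ 2) / (2 * (σ:ℂ) ^ 2) := by
      rw [eq_div_iff (mul_ne_zero two_ne_zero (pow_ne_zero 2 hσ'))]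
      linear_combination hd2
    have hbb : (ρ : ℂ) * σ * φ * Complex.I - bj = -b := by rw [hb]; ring
    rw [hbb]
    subst hg
    simp only [← hE] at hdiv ⊢
    have h1 : 1 - (b + d) / (b - d) * E = ((b - d) - (b + d) * E) / (b - d) := by
      field_simp
    have hτ' : (b - d) - (b + d) * E ≠ 0 := by
      intro h
      exact hτ (by rw [h1, h, zero_div])
    exact aux13 (σ : ℂ) b d E _ hσ' hden hτ' key
end

section
/- With D(τ) as in Heston's solution and C(τ) = rφiτ + (a/σ²)·{(b_j - ρσφi + d)τ - 2·Log((1 - g·e^{dτ})/(1 - g))}, assuming a continuous branch of the logarithm along τ ↦ (1 - g·e^{dτ})/(1 - g), C satisfies C'(τ) = rφi + a·D(τ) with C(0) = 0. -/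
/-- With a continuous branch L of the logarithm along τ ↦ (1 - g·e^{dτ})/(1 - g),
    the function C(τ) = rφiτ + (a/σ²)((b_j - ρσφi + d)τ - 2L(τ)) satisfies
    C' = rφi + aD with C(0) = 0. -/
theorem stmt14 (r a T σ bj ρ φ : ℝ) (hT : 0 < T) (hσ : 0 < σ)
    (d g : ℂ) (hd0 : d ≠ 0) (hg1 : g ≠ 1)
    (hden : (bj : ℂ) - (ρ : ℂ) * σ * φ * Complex.I - d ≠ 0)
    (hg : g = ((bj : ℂ) - (ρ : ℂ) * σ * φ * Complex.I + d)
        / ((bj : ℂ) - (ρ : ℂ) * σ * φ * Complex.I - d))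
    (hne : ∀ τ ∈ Set.Icc (0 : ℝ) T, 1 - g * Complex.exp (d * τ) ≠ 0)
    (D : ℝ → ℂ)
    (hD : ∀ τ : ℝ, D τ = (((bj : ℂ) - (ρ : ℂ) * σ * φ * Complex.I + d) / (σ : ℂ) ^ 2)
        * (1 - Complex.exp (d * τ)) / (1 - g * Complex.exp (d * τ)))
    (L : ℝ → ℂ)
    (hLcont : ContinuousOn L (Set.Icc 0 T))
    (hL0 : L 0 = 0)
    (hLexp : ∀ τ ∈ Set.Icc (0 : ℝ) T,
        Complex.exp (L τ) = (1 - g * Complex.exp (d * τ)) / (1 - g))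
    (C : ℝ → ℂ)
    (hC : ∀ τ : ℝ, C τ = (r : ℂ) * φ * Complex.I * τ
        + ((a : ℂ) / (σ : ℂ) ^ 2)
          * (((bj : ℂ) - (ρ : ℂ) * σ * φ * Complex.I + d) * τ - 2 * L τ)) :
    C 0 = 0 ∧
      ∀ τ ∈ Set.Icc (0 : ℝ) T,
        HasDerivWithinAt C ((r : ℂ) * φ * Complex.I + (a : ℂ) * D τ)
          (Set.Icc 0 T) τ := by
  have hσ' : (σ : ℂ) ≠ 0 := by exact_mod_cast hσ.ne'
  set β : ℂ := (bj : ℂ) - (ρ : ℂ) * σ * φ * Complex.I with hβ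
  have hgβ : g * (β - d) = β + d := by
    rw [hg]; exact div_mul_cancel₀ _ hden
  constructor
  · simp [hC, hL0]
  · intro τ₀ hτ₀
    set N : ℝ → ℂ := fun τ => 1 - g * Complex.exp (d * τ) with hNdef
    have hNτ0 : N τ₀ ≠ 0 := hne τ₀ hτ₀
    -- derivative of exp (d τ)
    have hEderiv : ∀ t : ℝ, HasDerivAt (fun s : ℝ => Complex.exp (d * s))
        (d * Complex.exp (d * t)) t := by
      intro t
      have h1 : HasDerivAt (fun z : ℂ => Complex.exp (d * z))
          (d * Complex.exp (d * t)) (t : ℂ) := by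
        have := (Complex.hasDerivAt_exp (d * (t : ℂ))).comp (t : ℂ)
          ((hasDerivAt_id (t : ℂ)).const_mul d)
        simpa [mul_comm, Function.comp_def] using this
      exact h1.comp_ofReal
    have hNderiv : HasDerivAt N (-(g * (d * Complex.exp (d * τ₀)))) τ₀ := by
      have := ((hEderiv τ₀).const_mul g).const_sub (1 : ℂ)
      simpa [hNdef, mul_assoc] using this
    -- derivative of log (N τ / N τ₀)
    have hq : HasDerivAt (fun τ => N τ / N τ₀)
        (-(g * (d * Complex.exp (d * τ₀))) / N τ₀) τ₀ := hNderiv.div_const _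
    have hdivself : N τ₀ / N τ₀ = 1 := div_self hNτ0
    have hlog : HasDerivAt (fun τ => Complex.log (N τ / N τ₀))
        (-(g * (d * Complex.exp (d * τ₀))) / N τ₀) τ₀ := by
      have hl1 : HasDerivAt Complex.log ((1 : ℂ)⁻¹) (N τ₀ / N τ₀) := by
        rw [hdivself]; exact Complex.hasDerivAt_log Complex.one_mem_slitPlane
      have := hl1.comp τ₀ hq
      simpa [Function.comp_def] using this
    -- eventual equality of L with the local logarithm branch
    have hkcont : ContinuousWithinAt
        (fun τ => L τ - L τ₀ - Complex.log (N τ / N τ₀)) (Set.Icc 0 T) τ₀ := by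
      exact ((hLcont τ₀ hτ₀).sub continuousWithinAt_const).sub
        hlog.continuousAt.continuousWithinAt
    have hk0 : (fun τ => L τ - L τ₀ - Complex.log (N τ / N τ₀)) τ₀ = 0 := by
      simp [hdivself]
    have htend : Filter.Tendsto (fun τ => L τ - L τ₀ - Complex.log (N τ / N τ₀))
        (nhdsWithin τ₀ (Set.Icc 0 T)) (nhds 0) := by
      have h := hkcont
      simp only [ContinuousWithinAt] at h
      convert h using 2
      simp [hdivself]
    have hπ : (0 : ℝ) < 2 * Real.pi := by positivity
    have hsmall : ∀ᶠ τ in nhdsWithin τ₀ (Set.Icc 0 T),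
        ‖L τ - L τ₀ - Complex.log (N τ / N τ₀)‖ < 2 * Real.pi := by
      have := htend (Metric.ball_mem_nhds (0 : ℂ) hπ)
      filter_upwards [this] with τ hτ
      simpa [Metric.mem_ball, dist_eq_norm] using hτ
    have hmem : ∀ᶠ τ in nhdsWithin τ₀ (Set.Icc 0 T), τ ∈ Set.Icc 0 T :=
      self_mem_nhdsWithin
    have hEq : L =ᶠ[nhdsWithin τ₀ (Set.Icc 0 T)]
        fun τ => Complex.log (N τ / N τ₀) + L τ₀ := by
      filter_upwards [hsmall, hmem] with τ h1 h2
      have hNτ : N τ ≠ 0 := hne τ h2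
      have hexpk : Complex.exp (L τ - L τ₀ - Complex.log (N τ / N τ₀)) = 1 := by
        rw [Complex.exp_sub, Complex.exp_sub, hLexp τ h2, hLexp τ₀ hτ₀,
          Complex.exp_log (div_ne_zero hNτ hNτ0)]
        have h1g : (1 : ℂ) - g ≠ 0 := sub_ne_zero.mpr (Ne.symm hg1)
        field_simp
        have h0 : (1 : ℂ) - g * Complex.exp (d * τ₀) ≠ 0 := hne τ₀ hτ₀
        simp only [hNdef]
        exact mul_div_cancel_right₀ _ h0
      obtain ⟨n, hn⟩ := Complex.exp_eq_one_iff.mp hexpk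
      have hnorm : ‖L τ - L τ₀ - Complex.log (N τ / N τ₀)‖
          = |(n : ℝ)| * (2 * Real.pi) := by
        rw [hn, norm_mul, norm_mul, norm_mul]
        simp [abs_of_nonneg Real.pi_pos.le]
      have hn0 : n = 0 := by
        by_contra hn0
        have : (1 : ℝ) ≤ |(n : ℝ)| := by
          exact_mod_cast Int.one_le_abs (by exact_mod_cast hn0)
        have : 2 * Real.pi ≤ |(n : ℝ)| * (2 * Real.pi) := by nlinarith
        rw [hnorm] at h1; linarith
      have : L τ - L τ₀ - Complex.log (N τ / N τ₀) = 0 := by simp [hn, hn0]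
      linear_combination this
    have hEq0 : L τ₀ = Complex.log (N τ₀ / N τ₀) + L τ₀ := by simp [hdivself]
    have hLd : HasDerivWithinAt L (-(g * (d * Complex.exp (d * τ₀))) / N τ₀)
        (Set.Icc 0 T) τ₀ :=
      HasDerivWithinAt.congr_of_eventuallyEq
        ((hlog.add_const (L τ₀)).hasDerivWithinAt) hEq hEq0
    -- derivative of C
    have hid : HasDerivAt (fun τ : ℝ => (τ : ℂ)) 1 τ₀ := by
      simpa using (hasDerivAt_id τ₀).ofReal_comp
    have hCd : HasDerivWithinAt C
        ((r : ℂ) * φ * Complex.I * 1 + ((a : ℂ) / (σ : ℂ) ^ 2)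
          * ((β + d) * 1 - 2 * (-(g * (d * Complex.exp (d * τ₀))) / N τ₀)))
        (Set.Icc 0 T) τ₀ := by
      have h1 : HasDerivWithinAt (fun τ : ℝ => (r : ℂ) * φ * Complex.I * (τ : ℂ))
          ((r : ℂ) * φ * Complex.I * 1) (Set.Icc 0 T) τ₀ :=
        (hid.const_mul _).hasDerivWithinAt
      have h2 : HasDerivWithinAt (fun τ : ℝ => (β + d) * (τ : ℂ) - 2 * L τ)
          ((β + d) * 1 - 2 * (-(g * (d * Complex.exp (d * τ₀))) / N τ₀))
          (Set.Icc 0 T) τ₀ :=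
        ((hid.const_mul (β + d)).hasDerivWithinAt).sub (hLd.const_mul 2)
      have := h1.add (h2.const_mul ((a : ℂ) / (σ : ℂ) ^ 2))
      refine (this.congr (fun τ _ => ?_) ?_) <;> simp only [Pi.add_apply, hC] <;> ring
    have h2 : (β + d) * 1 - 2 * (-(g * (d * Complex.exp (d * τ₀))) / N τ₀)
        = (β + d) * (1 - Complex.exp (d * τ₀)) / N τ₀ := by
      rw [eq_div_iff hNτ0, sub_mul]
      have h3 : 2 * (-(g * (d * Complex.exp (d * τ₀))) / N τ₀) * N τ₀
          = 2 * -(g * (d * Complex.exp (d * τ₀))) := by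
        field_simp
      rw [h3, hNdef]
      linear_combination (-Complex.exp (d * τ₀)) * hgβ
    convert hCd using 1
    rw [hD, h2, hNdef]
    ring
end

section
/- If G: [0,∞) → ℝ is continuously differentiable, G(0) = 0, and G solves G' = (σ²/2)G² - αG - β with α, β, σ > 0, then G(τ) < 0 for all τ > 0 and G(τ) > G₋ for all τ ≥ 0, where G₋ = (α - √(α² + 2βσ²))/σ² is the negative root of (σ²/2)x² - αx - β = 0. -/
set_option maxHeartbeats 1000000 in
/-- A C¹ solution of the Riccati equation G' = (σ²/2)G² - αG - β with G(0) = 0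
    satisfies G(τ) < 0 for τ > 0 and stays above the negative root G₋. -/
theorem stmt17 (α β σ : ℝ) (hα : 0 < α) (hβ : 0 < β) (hσ : 0 < σ)
    (G : ℝ → ℝ)
    (hcont : ContinuousOn G (Set.Ici 0))
    (hG0 : G 0 = 0)
    (hG' : ∀ τ ∈ Set.Ici (0 : ℝ),
        HasDerivWithinAt G (σ ^ 2 / 2 * (G τ) ^ 2 - α * G τ - β) (Set.Ici 0) τ) :
    (∀ τ : ℝ, 0 < τ → G τ < 0) ∧
      ∀ τ : ℝ, 0 ≤ τ → (α - Real.sqrt (α ^ 2 + 2 * β * σ ^ 2)) / σ ^ 2 < G τ := by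
  set K : ℝ := Real.sqrt (α ^ 2 + 2 * β * σ ^ 2) with hKdef
  have hσ2 : (0:ℝ) < σ ^ 2 := by positivity
  have hK2 : K ^ 2 = α ^ 2 + 2 * β * σ ^ 2 := Real.sq_sqrt (by positivity)
  have hK0 : 0 < K := Real.sqrt_pos.mpr (by positivity)
  have hαK : α < K := by nlinarith
  set Gm : ℝ := (α - K) / σ ^ 2 with hGmdef
  have hGmσ : σ ^ 2 * Gm = α - K := by rw [hGmdef]; field_simp
  have hGmneg : Gm < 0 := div_neg_of_neg_of_pos (by linarith) hσ2
  have hGmroot : σ ^ 2 / 2 * Gm ^ 2 - α * Gm - β = 0 := by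
    have h1 : (σ ^ 2 * Gm) ^ 2 = (α - K) ^ 2 := by rw [hGmσ]
    nlinarith [h1]
  -- key identity: f(x) + K (x - Gm) = (σ²/2)(x - Gm)²
  have hkey : ∀ x : ℝ, σ ^ 2 / 2 * x ^ 2 - α * x - β + K * (x - Gm)
      = σ ^ 2 / 2 * (x - Gm) ^ 2 := by
    intro x
    have h1 : (σ ^ 2 * Gm) ^ 2 = (α - K) ^ 2 := by rw [hGmσ]
    nlinarith [hGmσ, h1, hGmroot]
  -- Lower bound: u τ = (G τ - Gm) * exp (K τ) is monotone on Ici 0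
  have hlow : ∀ τ : ℝ, 0 ≤ τ → Gm < G τ := by
    intro τ hτ
    set u : ℝ → ℝ := fun t => (G t - Gm) * Real.exp (K * t) with hudef
    have hucont : ContinuousOn u (Set.Ici 0) :=
      (hcont.sub continuousOn_const).mul (Real.continuous_exp.comp
        (continuous_const.mul continuous_id)).continuousOn
    have humono : MonotoneOn u (Set.Ici 0) := by
      apply monotoneOn_of_hasDerivWithinAt_nonneg (f' := fun t =>
        Real.exp (K * t) * (σ ^ 2 / 2 * (G t - Gm) ^ 2)) (convex_Ici 0) hucont
      · intro x hx
        rw [interior_Ici] at hx ⊢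
        have hx0 : (0:ℝ) ≤ x := le_of_lt hx
        have hG'x := (hG' x hx0).mono (Set.Ioi_subset_Ici_self)
        have hexp : HasDerivWithinAt (fun t => Real.exp (K * t))
            (Real.exp (K * x) * K) (Set.Ioi 0) x := by
          simpa using (((hasDerivAt_id x).const_mul K).exp).hasDerivWithinAt
        have hprod := ((hG'x.sub_const Gm).mul hexp)
        have heq : (σ ^ 2 / 2 * G x ^ 2 - α * G x - β) * Real.exp (K * x)
            + (G x - Gm) * (Real.exp (K * x) * K)
            = Real.exp (K * x) * (σ ^ 2 / 2 * (G x - Gm) ^ 2) := by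
          rw [← hkey (G x)]; ring
        exact heq ▸ hprod
      · intro x hx
        positivity
    have h0 : u 0 ≤ u τ := humono Set.self_mem_Ici hτ hτ
    have hu0 : u 0 = -Gm := by simp [hudef, hG0]
    have h2 : 0 < (G τ - Gm) * Real.exp (K * τ) := by
      have : 0 < u τ := by rw [hu0] at h0; linarith
      exact this
    nlinarith [Real.exp_pos (K * τ), h2]
  -- Weak upper bound: G τ ≤ 0 on Ici 0
  have hupper : ∀ τ : ℝ, 0 ≤ τ → G τ ≤ 0 := by
    intro τ₁ hτ₁
    by_contra hpos
    push_neg at hpos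
    have hτ₁0 : 0 < τ₁ := by
      rcases lt_or_eq_of_le hτ₁ with h | h
      · exact h
      · exfalso; rw [← h, hG0] at hpos; exact lt_irrefl 0 hpos
    set S : Set ℝ := {t ∈ Set.Icc 0 τ₁ | G t ≤ 0} with hSdef
    have hS0 : (0:ℝ) ∈ S := ⟨⟨le_rfl, le_of_lt hτ₁0⟩, le_of_eq hG0⟩
    have hSclosed : IsClosed S := by
      have hSeq : S = Set.Icc 0 τ₁ ∩ G ⁻¹' Set.Iic 0 := rfl
      rw [hSeq]
      exact (hcont.mono (Set.Icc_subset_Ici_self)).preimage_isClosed_of_isClosed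
        isClosed_Icc isClosed_Iic
    have hScompact : IsCompact S :=
      isCompact_Icc.of_isClosed_subset hSclosed (fun t ht => ht.1)
    set t₀ : ℝ := sSup S with ht₀def
    have ht₀S : t₀ ∈ S := hScompact.sSup_mem ⟨0, hS0⟩
    have ht₀0 : 0 ≤ t₀ := ht₀S.1.1
    have hGt₀ : G t₀ ≤ 0 := ht₀S.2
    have ht₀lt : t₀ < τ₁ := lt_of_le_of_ne ht₀S.1.2 (by
      intro h; rw [h] at hGt₀; linarith)
    have hafter : ∀ t, t₀ < t → t ≤ τ₁ → 0 < G t := by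
      intro t ht ht'
      by_contra hle
      push_neg at hle
      have : t ∈ S := ⟨⟨le_trans ht₀0 (le_of_lt ht), ht'⟩, hle⟩
      exact absurd (le_csSup hScompact.bddAbove this) (not_le.mpr ht)
    -- G t₀ = 0 by right continuity
    have hGt₀0 : G t₀ = 0 := by
      refine le_antisymm hGt₀ ?_
      have htend : Filter.Tendsto G (nhdsWithin t₀ (Set.Ioi t₀)) (nhds (G t₀)) :=
        ((hcont t₀ ht₀0).mono (fun x hx => le_of_lt (lt_of_le_of_lt ht₀0 hx))).tendsto
      refine ge_of_tendsto htend ?_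
      have hev : ∀ᶠ t in nhdsWithin t₀ (Set.Ioi t₀), t < τ₁ :=
        eventually_nhdsWithin_of_eventually_nhds (Filter.Tendsto.eventually_lt_const ht₀lt
          Filter.tendsto_id)
      filter_upwards [hev, self_mem_nhdsWithin] with t h1 h2
      exact le_of_lt (hafter t h2 (le_of_lt h1))
    -- slope contradiction
    have hd : HasDerivWithinAt G (-β) (Set.Ici 0) t₀ := by
      have h := hG' t₀ ht₀0
      rw [hGt₀0] at h
      convert h using 1
      ring
    have hslope := hasDerivWithinAt_iff_tendsto_slope.mp hd
    have hslope' : Filter.Tendsto (slope G t₀) (nhdsWithin t₀ (Set.Ioi t₀)) (nhds (-β)) :=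
      hslope.mono_left (nhdsWithin_mono t₀ (fun x hx =>
        ⟨le_trans ht₀0 (le_of_lt hx), ne_of_gt hx⟩))
    have hevneg : ∀ᶠ t in nhdsWithin t₀ (Set.Ioi t₀), slope G t₀ t < 0 :=
      hslope'.eventually (Filter.Tendsto.eventually_lt_const (by linarith) Filter.tendsto_id)
    have hevlt : ∀ᶠ t in nhdsWithin t₀ (Set.Ioi t₀), t < τ₁ :=
      eventually_nhdsWithin_of_eventually_nhds (Filter.Tendsto.eventually_lt_const ht₀lt
        Filter.tendsto_id)
    have : ∃ t, t ∈ Set.Ioi t₀ ∧ slope G t₀ t < 0 ∧ t < τ₁ := by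
      rcases (hevneg.and (hevlt.and self_mem_nhdsWithin)).exists with ⟨t, h1, h2, h3⟩
      exact ⟨t, h3, h1, h2⟩
    rcases this with ⟨t, ht, hsl, htτ⟩
    have hGt : 0 < G t := hafter t ht (le_of_lt htτ)
    rw [slope_def_field, hGt₀0] at hsl
    rcases div_neg_iff.mp hsl with ⟨h1, h2⟩ | ⟨h1, h2⟩
    · linarith [ht.out]
    · linarith
  -- Strict negativity via v τ = G τ * exp (α τ)
  have hstrict : ∀ τ : ℝ, 0 < τ → G τ < 0 := by
    intro τ hτ
    set v : ℝ → ℝ := fun t => G t * Real.exp (α * t) with hvdef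
    have hvcont : ContinuousOn v (Set.Ici 0) :=
      hcont.mul (Real.continuous_exp.comp
        (continuous_const.mul continuous_id)).continuousOn
    have hvanti : StrictAntiOn v (Set.Ici 0) := by
      apply strictAntiOn_of_hasDerivWithinAt_neg (f' := fun t =>
        Real.exp (α * t) * (σ ^ 2 / 2 * (G t) ^ 2 - β)) (convex_Ici 0) hvcont
      · intro x hx
        rw [interior_Ici] at hx ⊢
        have hx0 : (0:ℝ) ≤ x := le_of_lt hx
        have hG'x := (hG' x hx0).mono (Set.Ioi_subset_Ici_self)
        have hexp : HasDerivWithinAt (fun t => Real.exp (α * t))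
            (Real.exp (α * x) * α) (Set.Ioi 0) x := by
          simpa using (((hasDerivAt_id x).const_mul α).exp).hasDerivWithinAt
        have hprod := hG'x.mul hexp
        have heq : (σ ^ 2 / 2 * G x ^ 2 - α * G x - β) * Real.exp (α * x)
            + G x * (Real.exp (α * x) * α)
            = Real.exp (α * x) * (σ ^ 2 / 2 * (G x) ^ 2 - β) := by ring
        exact heq ▸ hprod
      · intro x hx
        rw [interior_Ici] at hx
        have h1 : Gm < G x := hlow x (le_of_lt hx)
        have h2 : G x ≤ 0 := hupper x (le_of_lt hx)
        have hexp := Real.exp_pos (α * x)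
        have hneg : σ ^ 2 / 2 * G x ^ 2 - β < 0 := by
          rcases lt_or_eq_of_le h2 with h | h
          · have hsq : G x ^ 2 < Gm ^ 2 := by nlinarith
            have hαGm : α * Gm < 0 := mul_neg_of_pos_of_neg hα hGmneg
            nlinarith [hGmroot]
          · rw [h]
            nlinarith
        exact mul_neg_of_pos_of_neg hexp hneg
    have hlt : v τ < v 0 := hvanti Set.self_mem_Ici (Set.mem_Ici.mpr hτ.le) hτ
    have hv0 : v 0 = 0 := by simp [hvdef, hG0]
    rw [hv0] at hlt
    have h2 : G τ * Real.exp (α * τ) < 0 := hlt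
    nlinarith [Real.exp_pos (α * τ), h2]
  exact ⟨hstrict, fun τ hτ => hlow τ hτ⟩
end
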